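/- Let τ > 0, q > 0 and m ∈ ℝ with m² ≤ q. On Ω = ℝ × ℝ equipped with the product measure μ = γ ⊗ γ of two standard Gaussians, define λ(ω₁,ω₂) = √q·ω₁ and ν(ω₁,ω₂) = (m/√q)·ω₁ + √(1 − m²/q)·ω₂, so that (ν, λ) is centered jointly Gaussian with Var ν = 1, Var λ = q and Cov(ν,λ) = m. Let F be the σ-algebra generated by λ. Then μ-almost everywhere, μ[σ⋆(ν/τ) | F] = σ⋆( (m/q)·λ / √(τ² + 1 − m²/q) ). (Consequently, the calibration of the logistic classifier σ(λ) with respect to the teacher σ⋆(ν/τ) satisfies Δ_p = p − σ⋆( (m/q)·log(p/(1−p)) / √(1 − m²/q + τ²) ) for every p ∈ (0,1).) -/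

import Mathlib

open MeasureTheory ProbabilityTheory Real

/-- The error function `erf x = (2/√π) ∫₀ˣ e^{-t²} dt`. -/
noncomputable def erf (x : ℝ) : ℝ := 2 / Real.sqrt Real.pi * ∫ t in (0:ℝ)..x, Real.exp (-t ^ 2)

/-- The complementary error function. -/
noncomputable def erfc (x : ℝ) : ℝ := 1 - erf x

/-- The standard Gaussian CDF `σ⋆(x) = (1/2) erfc(-x/√2)`. -/
noncomputable def sigmaStar (x : ℝ) : ℝ := (1 / 2) * erfc (-x / Real.sqrt 2)

open Set
open scoped ENNReal NNReal


lemma gaussianPDFReal_std (t : ℝ) :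
    gaussianPDFReal 0 1 t = (Real.sqrt (2 * π))⁻¹ * Real.exp (-(t / Real.sqrt 2) ^ 2) := by
  rw [gaussianPDFReal]
  rw [div_pow, sq_sqrt (by norm_num : (0:ℝ) ≤ 2)]
  norm_num
  left; ring

lemma integral_Iic_zero_pdf : ∫ z in Set.Iic (0:ℝ), gaussianPDFReal 0 1 z = 1/2 := by
  have heven : ∀ z : ℝ, gaussianPDFReal 0 1 (-z) = gaussianPDFReal 0 1 z := by
    intro z; simp [gaussianPDFReal, neg_pow]
  have h1 := integral_comp_neg_Iic 0 (gaussianPDFReal 0 1)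
  simp_rw [heven, neg_zero] at h1
  have hint := integrable_gaussianPDFReal 0 1
  have h2 : (∫ z in Set.Iic (0:ℝ), gaussianPDFReal 0 1 z)
      + ∫ z in Set.Ioi (0:ℝ), gaussianPDFReal 0 1 z = 1 := by
    rw [← compl_Iic, MeasureTheory.integral_add_compl measurableSet_Iic hint]
    exact integral_gaussianPDFReal_eq_one 0 one_ne_zero
  rw [h1] at h2 ⊢
  linarith

lemma erf_neg (x : ℝ) : erf (-x) = - erf x := by
  unfold erf
  have h : ∫ t in (0:ℝ)..(-x), Real.exp (-t ^ 2) = - ∫ t in (0:ℝ)..x, Real.exp (-t ^ 2) := by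
    have h2 := intervalIntegral.integral_comp_neg (a := (0:ℝ)) (b := x)
      (f := fun t => Real.exp (-t ^ 2))
    have h3 : (fun t : ℝ => Real.exp (-(-t) ^ 2)) = fun t => Real.exp (-t ^ 2) := by
      funext t; rw [neg_pow]; norm_num
    rw [h3, neg_zero] at h2
    rw [intervalIntegral.integral_symm, ← h2]
  rw [h]; ring

lemma integral_pdf_eq_erf (x : ℝ) :
    ∫ t in (0:ℝ)..x, gaussianPDFReal 0 1 t = (1/2) * erf (x / Real.sqrt 2) := by
  have h2 : (Real.sqrt 2 : ℝ) ≠ 0 := by positivity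
  simp_rw [gaussianPDFReal_std]
  rw [intervalIntegral.integral_const_mul]
  rw [intervalIntegral.integral_comp_div (f := fun u => Real.exp (-u ^ 2)) h2]
  rw [erf]
  rw [zero_div]
  rw [smul_eq_mul]
  have : Real.sqrt (2 * π) = Real.sqrt 2 * Real.sqrt π := Real.sqrt_mul (by norm_num) _
  rw [this]
  have hπ : Real.sqrt π ≠ 0 := by positivity
  field_simp

lemma sigmaStar_eq (x : ℝ) :
    sigmaStar x = ((gaussianReal 0 1) (Set.Iic x)).toReal := by
  have h1 : ((gaussianReal 0 1) (Set.Iic x)).toReal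
      = ∫ z in Set.Iic x, gaussianPDFReal 0 1 z := by
    rw [gaussianReal_apply_eq_integral _ one_ne_zero, ENNReal.toReal_ofReal]
    exact setIntegral_nonneg measurableSet_Iic fun z _ => gaussianPDFReal_nonneg _ _ _
  have hint := integrable_gaussianPDFReal 0 1
  have h2 := intervalIntegral.integral_Iic_sub_Iic (μ := (volume : Measure ℝ))
    (f := gaussianPDFReal 0 1) (a := (0:ℝ)) (b := x) hint.integrableOn hint.integrableOn
  rw [integral_Iic_zero_pdf, integral_pdf_eq_erf] at h2
  rw [h1, sigmaStar, erfc, neg_div, erf_neg]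
  linarith


lemma pdf_mul (s u y : ℝ) :
    gaussianPDFReal 0 1 y * gaussianPDFReal 0 1 (u + s * y)
      = gaussianPDFReal 0 (NNReal.mk (1 + s^2) (by positivity)) u
        * gaussianPDFReal (-(s*u)/(1+s^2)) (NNReal.mk (1+s^2)⁻¹ (by positivity)) y := by
  have hs : (0:ℝ) < 1 + s^2 := by positivity
  have hπ : (0:ℝ) < 2 * π := by positivity
  simp only [gaussianPDFReal, NNReal.coe_mk, NNReal.coe_one]
  rw [mul_mul_mul_comm, ← Real.exp_add, mul_mul_mul_comm, ← Real.exp_add,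
    ← mul_inv, ← mul_inv, ← Real.sqrt_mul (by positivity : (0:ℝ) ≤ 2 * π * 1),
    ← Real.sqrt_mul (by positivity : (0:ℝ) ≤ 2 * π * (1 + s ^ 2))]
  have h1 : 2 * π * 1 * (2 * π * 1) = (2*π*(1+s^2)) * (2*π*((1+s^2)⁻¹)) := by
    field_simp
  rw [h1]
  congr 1
  congr 1
  field_simp
  ring


lemma lintegral_Iic_shift (f : ℝ → ℝ≥0∞) (a b : ℝ) :
    ∫⁻ z in Set.Iic (b + a), f z = ∫⁻ u in Set.Iic b, f (u + a) := by
  rw [← lintegral_indicator measurableSet_Iic, ← lintegral_indicator measurableSet_Iic,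
    ← lintegral_add_right_eq_self (fun z => (Set.Iic (b + a)).indicator f z) a]
  congr 1
  funext u
  simp only [Set.indicator_apply, Set.mem_Iic, add_le_add_iff_right]


lemma gaussianReal_Iic_scale (c : ℝ) (v : ℝ≥0) (hv : (0:ℝ) < v) :
    gaussianReal 0 v (Set.Iic c)
      = gaussianReal 0 1 (Set.Iic (c / Real.sqrt v)) := by
  have hs : (0:ℝ) < Real.sqrt v := Real.sqrt_pos.mpr hv
  have hmap := gaussianReal_map_const_mul (μ := 0) (v := 1) (Real.sqrt v)
  have hv' : (NNReal.mk ((Real.sqrt v)^2) (sq_nonneg _) * 1 : ℝ≥0) = v := by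
    ext; simp [Real.sq_sqrt hv.le]
  rw [mul_zero, hv'] at hmap
  rw [← hmap, Measure.map_apply (measurable_const_mul _) measurableSet_Iic]
  congr 1
  ext z
  simp only [Set.mem_preimage, Set.mem_Iic]
  rw [mul_comm, ← le_div_iff₀ hs]

lemma integral_sigmaStar_gaussian (c s : ℝ) :
    ∫ y, sigmaStar (c + s * y) ∂(gaussianReal 0 1)
      = sigmaStar (c / Real.sqrt (1 + s ^ 2)) := by
  have hs : (0:ℝ) < 1 + s ^ 2 := by positivity
  set γ := gaussianReal 0 1 with hγ
  have hmono : Monotone fun t : ℝ => γ (Set.Iic t) :=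
    fun a b hab => measure_mono (Set.Iic_subset_Iic.mpr hab)
  have hmeas : Measurable fun y : ℝ => γ (Set.Iic (c + s * y)) :=
    hmono.measurable.comp (measurable_const.add (measurable_id.const_mul s))
  -- step 1 : to lintegral
  have h1 : ∫ y, sigmaStar (c + s * y) ∂γ
      = (∫⁻ y, γ (Set.Iic (c + s * y)) ∂γ).toReal := by
    simp_rw [sigmaStar_eq]
    rw [integral_toReal hmeas.aemeasurable]
    exact ae_of_all _ fun y => measure_lt_top _ _
  -- step 2 : compute the lintegral
  set v1 : ℝ≥0 := NNReal.mk (1 + s^2) (by positivity) with hv1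
  have h2 : ∫⁻ y, γ (Set.Iic (c + s * y)) ∂γ = gaussianReal 0 v1 (Set.Iic c) := by
    have hshift : ∀ y : ℝ, γ (Set.Iic (c + s * y))
        = ∫⁻ u in Set.Iic c, gaussianPDF 0 1 (u + s * y) := by
      intro y
      rw [hγ, gaussianReal_apply _ one_ne_zero, ← lintegral_Iic_shift]
    simp_rw [hshift]
    have hpdfmeas : Measurable fun p : ℝ × ℝ => gaussianPDF 0 1 (p.2 + s * p.1) :=
      (measurable_gaussianPDF 0 1).comp (measurable_snd.add (measurable_fst.const_mul s))
    rw [hγ, gaussianReal_of_var_ne_zero _ one_ne_zero,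
      lintegral_withDensity_eq_lintegral_mul _ (measurable_gaussianPDF 0 1)
        (hpdfmeas.lintegral_prod_right')]
    simp only [Pi.mul_apply]
    have hc : ∀ y : ℝ, gaussianPDF 0 1 y * ∫⁻ u in Set.Iic c, gaussianPDF 0 1 (u + s * y)
        = ∫⁻ u in Set.Iic c, gaussianPDF 0 1 y * gaussianPDF 0 1 (u + s * y) := fun y =>
      (lintegral_const_mul _ ((measurable_gaussianPDF 0 1).comp (measurable_add_const _))).symm
    simp_rw [hc]
    rw [lintegral_lintegral_swap]
    · set v2 : ℝ≥0 := NNReal.mk (1 + s^2)⁻¹ (by positivity) with hv2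
      have hv2ne : v2 ≠ 0 := NNReal.coe_ne_zero.mp (by simp only [hv2, NNReal.coe_mk]; positivity)
      have hv1ne : v1 ≠ 0 := NNReal.coe_ne_zero.mp (by simp only [hv1, NNReal.coe_mk]; positivity)
      have hinner : ∀ u : ℝ, (∫⁻ y, gaussianPDF 0 1 y * gaussianPDF 0 1 (u + s * y))
          = gaussianPDF 0 v1 u := by
        intro u
        have hpt : ∀ y : ℝ, gaussianPDF 0 1 y * gaussianPDF 0 1 (u + s * y)
            = gaussianPDF 0 v1 u * gaussianPDF (-(s*u)/(1+s^2)) v2 y := by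
          intro y
          simp only [gaussianPDF]
          rw [← ENNReal.ofReal_mul (gaussianPDFReal_nonneg _ _ _),
            ← ENNReal.ofReal_mul (gaussianPDFReal_nonneg _ _ _)]
          rw [pdf_mul]
        simp_rw [hpt]
        rw [lintegral_const_mul _ (measurable_gaussianPDF _ _),
          lintegral_gaussianPDF_eq_one _ hv2ne, mul_one]
      simp_rw [hinner]
      exact (gaussianReal_apply _ hv1ne _).symm
    · exact (((measurable_gaussianPDF 0 1).comp measurable_fst).mul
        ((measurable_gaussianPDF 0 1).comp (measurable_snd.add (measurable_fst.const_mul s)))).aemeasurable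
  rw [h1, h2, gaussianReal_Iic_scale c v1 hs, ← sigmaStar_eq]
  simp only [hv1, NNReal.coe_mk]


lemma sigmaStar_mono : Monotone sigmaStar := fun a b hab => by
  rw [sigmaStar_eq, sigmaStar_eq]
  exact ENNReal.toReal_mono (measure_ne_top _ _) (measure_mono (Set.Iic_subset_Iic.mpr hab))

lemma sigmaStar_meas : Measurable sigmaStar := sigmaStar_mono.measurable

lemma sigmaStar_bound (x : ℝ) : ‖sigmaStar x‖ ≤ 1 := by
  rw [sigmaStar_eq, Real.norm_eq_abs, abs_of_nonneg ENNReal.toReal_nonneg]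
  calc ((gaussianReal 0 1) (Set.Iic x)).toReal ≤ (1 : ℝ≥0∞).toReal :=
        ENNReal.toReal_mono ENNReal.one_ne_top prob_le_one
    _ = 1 := ENNReal.toReal_one

/-- For a jointly Gaussian pair `(ν, λ)` with `Var ν = 1`, `Var λ = q`, `Cov(ν, λ) = m`,
realized on the product of two standard Gaussians, the conditional expectation of the teacher
confidence `σ⋆(ν/τ)` given `λ` is `σ⋆((m/q)·λ / √(τ² + 1 − m²/q))`. -/
theorem condexp_teacher_given_erm
    (τ q m : ℝ) (hτ : 0 < τ) (hq : 0 < q) (hm : m ^ 2 ≤ q)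
    (μ : Measure (ℝ × ℝ)) (hμ : μ = (gaussianReal 0 1).prod (gaussianReal 0 1))
    (lam ν : ℝ × ℝ → ℝ)
    (hlam : lam = fun ω => Real.sqrt q * ω.1)
    (hν : ν = fun ω => (m / Real.sqrt q) * ω.1 + Real.sqrt (1 - m ^ 2 / q) * ω.2)
    (F : MeasurableSpace (ℝ × ℝ))
    (hF : F = MeasurableSpace.comap lam (inferInstance : MeasurableSpace ℝ)) :
    μ[(fun ω => sigmaStar (ν ω / τ)) | F]
      =ᵐ[μ] fun ω => sigmaStar ((m / q) * lam ω / Real.sqrt (τ ^ 2 + 1 - m ^ 2 / q)) := by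
  subst hμ hlam hν hF
  set γ := gaussianReal 0 1 with hγ
  set a : ℝ := m / Real.sqrt q with ha
  set b : ℝ := Real.sqrt (1 - m ^ 2 / q) with hb
  set T : ℝ := τ ^ 2 + 1 - m ^ 2 / q with hT
  have hq' : Real.sqrt q > 0 := Real.sqrt_pos.mpr hq
  have hbb : (0:ℝ) ≤ 1 - m ^ 2 / q := by
    rw [sub_nonneg, div_le_one hq]; exact hm
  have hb2 : b ^ 2 = 1 - m ^ 2 / q := Real.sq_sqrt hbb
  have hT0 : (0:ℝ) < T := by rw [hT]; nlinarith [sq_nonneg τ, hτ]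
  have hsT : Real.sqrt T > 0 := Real.sqrt_pos.mpr hT0
  -- the two functions
  set g : ℝ × ℝ → ℝ := fun ω => sigmaStar ((m / q) * (Real.sqrt q * ω.1) / Real.sqrt T) with hg
  set f : ℝ × ℝ → ℝ := fun ω => sigmaStar ((a * ω.1 + b * ω.2) / τ) with hf
  -- the key pointwise identity
  have key : ∀ x : ℝ, ∫ y, sigmaStar ((a * x + b * y) / τ) ∂γ
      = sigmaStar ((m / q) * (Real.sqrt q * x) / Real.sqrt T) := by
    intro x
    have h1 : ∀ y : ℝ, (a * x + b * y) / τ = a * x / τ + (b / τ) * y := by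
      intro y; field_simp
    simp_rw [h1]
    rw [integral_sigmaStar_gaussian (a * x / τ) (b / τ)]
    congr 1
    have h2 : 1 + (b / τ) ^ 2 = T / τ ^ 2 := by
      rw [div_pow, hb2, hT]; field_simp; ring
    rw [h2, Real.sqrt_div hT0.le, Real.sqrt_sq hτ.le]
    have h3 : (m / q) * Real.sqrt q = a := by
      rw [ha, div_mul_eq_mul_div, div_eq_div_iff hq.ne' hq'.ne', mul_assoc,
        Real.mul_self_sqrt hq.le]
    rw [← h3]
    field_simp
  -- measurability inputs
  have hlamm : Measurable fun ω : ℝ × ℝ => Real.sqrt q * ω.1 :=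
    measurable_fst.const_mul _
  have hle : MeasurableSpace.comap (fun ω : ℝ × ℝ => Real.sqrt q * ω.1)
      (inferInstance : MeasurableSpace ℝ) ≤ (inferInstance : MeasurableSpace (ℝ × ℝ)) :=
    hlamm.comap_le
  have hfm : Measurable f := by
    apply sigmaStar_meas.comp
    exact ((measurable_fst.const_mul _).add (measurable_snd.const_mul _)).div_const _
  have hgm0 : Measurable g := by
    apply sigmaStar_meas.comp
    exact ((hlamm.const_mul _).div_const _)
  haveI : IsProbabilityMeasure γ := by rw [hγ]; infer_instance
  have hfint : Integrable f (γ.prod γ) :=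
    Integrable.mono' (integrable_const 1) hfm.aestronglyMeasurable
      (ae_of_all _ fun ω => sigmaStar_bound _)
  have hgint : Integrable g (γ.prod γ) :=
    Integrable.mono' (integrable_const 1) hgm0.aestronglyMeasurable
      (ae_of_all _ fun ω => sigmaStar_bound _)
  refine (ae_eq_condExp_of_forall_setIntegral_eq hle hfint
    (fun s _ _ => hgint.integrableOn) ?_ ?_).symm
  · -- set integrals agree
    rintro s ⟨A, hA, rfl⟩ -
    set B : Set ℝ := (fun x : ℝ => Real.sqrt q * x) ⁻¹' A with hB
    have hBm : MeasurableSet B := (measurable_id.const_mul _) hA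
    have hsB : (fun ω : ℝ × ℝ => Real.sqrt q * ω.1) ⁻¹' A = B ×ˢ (Set.univ : Set ℝ) := by
      ext ω; simp [hB, Set.mem_prod]
    rw [hsB, setIntegral_prod g (hgint.integrableOn), setIntegral_prod f (hfint.integrableOn)]
    simp only [Measure.restrict_univ]
    refine setIntegral_congr_fun hBm fun x _ => ?_
    rw [hf, hg]
    simp only
    rw [key x, integral_const, probReal_univ, one_smul]
  · -- F-strong measurability of g
    have hlamF : Measurable[MeasurableSpace.comap (fun ω : ℝ × ℝ => Real.sqrt q * ω.1)
        (inferInstance : MeasurableSpace ℝ)] fun ω : ℝ × ℝ => Real.sqrt q * ω.1 :=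
      Measurable.of_comap_le le_rfl
    have : Measurable[MeasurableSpace.comap (fun ω : ℝ × ℝ => Real.sqrt q * ω.1)
        (inferInstance : MeasurableSpace ℝ)] g :=
      (sigmaStar_meas.comp ((measurable_id.const_mul (m/q)).div_const _)).comp hlamF
    exact this.stronglyMeasurable.aestronglyMeasurable
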